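/- Let J be a nonempty proper subset of {0,…,d}. Set M := span_K{δ_μ : Σ_k μ(k) = 0 and J ⊆ J(μ)} and N := span_K{δ_μ : Σ_k μ(k) = 0, J ⊆ J(μ) and J ≠ J(μ)}. Then N ⊆ M, both are stable under ρ(x) for every x ∈ 𝔤, and every K-subspace W with N ⊆ W ⊆ M that is stable under ρ(x) for all x ∈ 𝔤 equals N or M. -/

import Mathlib

section Aux

variable {K : Type} [Field K] [CharZero K] {d : ℕ}

/-- Coefficient formula for the diagonal operators. -/
lemma aux_diag_coeff
    (ρ : Matrix (Fin (d+1)) (Fin (d+1)) K →ₗ[K]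
        Module.End K ((Fin (d+1) → ℤ) →₀ K))
    (hρ₂ : ∀ (k : Fin (d+1)) (μ : Fin (d+1) → ℤ),
      ρ (Matrix.single k k (1:K)) (Finsupp.single μ (1:K)) =
        μ k • Finsupp.single μ (1:K))
    (k : Fin (d+1)) (v : (Fin (d+1) → ℤ) →₀ K) (μ₀ : Fin (d+1) → ℤ) :
    (ρ (Matrix.single k k (1:K)) v) μ₀ = ((μ₀ k : ℤ) : K) * v μ₀ := by
  classical
  induction v using Finsupp.induction_linear with
  | zero => simp
  | add f g hf hg => rw [map_add, Finsupp.add_apply, hf, hg, Finsupp.add_apply]; ring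
  | single μ c =>
    have h1 : Finsupp.single μ c = c • Finsupp.single μ (1:K) := by
      rw [Finsupp.smul_single, smul_eq_mul, mul_one]
    rw [h1, map_smul, hρ₂, Finsupp.smul_apply, Finsupp.smul_apply, Finsupp.smul_apply,
      Finsupp.single_apply]
    rcases eq_or_ne μ μ₀ with h | h
    · subst h; simp [zsmul_eq_mul]; ring
    · simp [if_neg h]

/-- Weight-space separation: for a subspace stable under the diagonal operators,
if `v ∈ W` then each "basis component" of `v` lies in `W`. -/
lemma aux_sep
    (ρ : Matrix (Fin (d+1)) (Fin (d+1)) K →ₗ[K]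
        Module.End K ((Fin (d+1) → ℤ) →₀ K))
    (hρ₂ : ∀ (k : Fin (d+1)) (μ : Fin (d+1) → ℤ),
      ρ (Matrix.single k k (1:K)) (Finsupp.single μ (1:K)) =
        μ k • Finsupp.single μ (1:K))
    (W : Submodule K ((Fin (d+1) → ℤ) →₀ K))
    (hWd : ∀ k : Fin (d+1), ∀ v ∈ W, ρ (Matrix.single k k (1:K)) v ∈ W) :
    ∀ n : ℕ, ∀ v ∈ W, v.support.card ≤ n → ∀ μ₀ ∈ v.support,
      Finsupp.single μ₀ (1:K) ∈ W := by
  classical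
  intro n
  induction n with
  | zero =>
    intro v _ hc μ₀ hμ₀
    rw [Nat.le_zero, Finset.card_eq_zero] at hc
    rw [hc] at hμ₀; exact absurd hμ₀ (Finset.notMem_empty _)
  | succ n IH =>
    intro v hv hc μ₀ hμ₀
    by_cases hs : v.support ⊆ {μ₀}
    · have hv' : v = Finsupp.single μ₀ (v μ₀) := Finsupp.support_subset_singleton.mp hs
      have hne : v μ₀ ≠ 0 := Finsupp.mem_support_iff.mp hμ₀
      have heq : (v μ₀)⁻¹ • v = Finsupp.single μ₀ (1:K) := by
        conv_lhs => rw [hv']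
        rw [Finsupp.smul_single, smul_eq_mul]
        simp [Finsupp.single_eq_same, inv_mul_cancel₀ hne]
      rw [← heq]; exact W.smul_mem _ hv
    · obtain ⟨μ₁, hμ₁, hne⟩ : ∃ μ₁ ∈ v.support, μ₁ ≠ μ₀ := by
        by_contra h
        push_neg at h
        exact hs fun x hx => Finset.mem_singleton.mpr (h x hx)
      obtain ⟨k, hk⟩ : ∃ k, μ₁ k ≠ μ₀ k := Function.ne_iff.mp hne
      set v' := ρ (Matrix.single k k (1:K)) v - ((μ₁ k : ℤ) : K) • v with hv'def
      have hv'W : v' ∈ W := W.sub_mem (hWd k v hv) (W.smul_mem _ hv)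
      have hcoeff : ∀ μ, v' μ = (((μ k : ℤ) : K) - ((μ₁ k : ℤ) : K)) * v μ := by
        intro μ
        rw [hv'def, Finsupp.sub_apply, Finsupp.smul_apply,
          aux_diag_coeff ρ hρ₂ k v μ, smul_eq_mul]
        ring
      have hsub : v'.support ⊆ v.support := by
        intro μ hμ
        rw [Finsupp.mem_support_iff] at hμ ⊢
        intro h0; exact hμ (by rw [hcoeff, h0, mul_zero])
      have hnotin : μ₁ ∉ v'.support := by
        rw [Finsupp.mem_support_iff]
        push_neg
        rw [hcoeff, sub_self, zero_mul]
      have hin : μ₀ ∈ v'.support := by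
        rw [Finsupp.mem_support_iff, hcoeff]
        refine mul_ne_zero ?_ (Finsupp.mem_support_iff.mp hμ₀)
        rw [sub_ne_zero]
        exact fun h => hk ((Int.cast_injective h).symm ▸ rfl)
      have hlt : v'.support.card ≤ n := by
        have : v'.support ⊂ v.support := ⟨hsub, fun h => hnotin (h hμ₁)⟩
        have := Finset.card_lt_card this
        omega
      exact IH v' hv'W hlt μ₀ hin

end Aux

section Aux2

variable {K : Type} [Field K] [CharZero K] {d : ℕ}

/-- One move: pull a unit from coordinate `j` into coordinate `i`. -/
lemma aux_move
    (ρ : Matrix (Fin (d+1)) (Fin (d+1)) K →ₗ[K]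
        Module.End K ((Fin (d+1) → ℤ) →₀ K))
    (hρ₁ : ∀ (i j : Fin (d+1)), i ≠ j → ∀ μ : Fin (d+1) → ℤ,
      ρ (Matrix.single i j (1:K)) (Finsupp.single μ (1:K)) =
        (μ j - 1) • Finsupp.single (μ + Pi.single i 1 - Pi.single j 1) (1:K))
    (W : Submodule K ((Fin (d+1) → ℤ) →₀ K))
    (hW : ∀ x : Matrix (Fin (d+1)) (Fin (d+1)) K, ∀ v ∈ W, ρ x v ∈ W)
    {i j : Fin (d+1)} (hij : i ≠ j) {μ : Fin (d+1) → ℤ} (hμj : μ j ≠ 1)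
    (h : Finsupp.single μ (1:K) ∈ W) :
    Finsupp.single (μ + Pi.single i 1 - Pi.single j 1) (1:K) ∈ W := by
  have h1 := hW (Matrix.single i j (1:K)) _ h
  rw [hρ₁ i j hij μ] at h1
  have hc : ((μ j - 1 : ℤ) : K) ≠ 0 := Int.cast_ne_zero.mpr (sub_ne_zero.mpr hμj)
  have h2 : Finsupp.single (μ + Pi.single i 1 - Pi.single j 1) (1:K) =
      ((μ j - 1 : ℤ) : K)⁻¹ •
        (((μ j - 1 : ℤ) : K) • Finsupp.single (μ + Pi.single i 1 - Pi.single j 1) (1:K)) := by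
    rw [smul_smul, inv_mul_cancel₀ hc, one_smul]
  rw [h2]
  refine W.smul_mem _ ?_
  rw [Int.cast_smul_eq_zsmul]
  exact h1

/-- Reachability: within the layer determined by `J`, any two admissible weights
are connected by moves. -/
lemma aux_reach
    (W : Submodule K ((Fin (d+1) → ℤ) →₀ K)) (J : Set (Fin (d+1)))
    (hmv : ∀ i j : Fin (d+1), i ≠ j → ∀ μ : Fin (d+1) → ℤ, μ j ≠ 1 →
      Finsupp.single μ (1:K) ∈ W →
      Finsupp.single (μ + Pi.single i 1 - Pi.single j 1) (1:K) ∈ W)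
    (ν : Fin (d+1) → ℤ)
    (hν1 : ∀ k, k ∈ J → 1 ≤ ν k) (hν0 : ∀ k, k ∉ J → ν k ≤ 0) :
    ∀ n : ℕ, ∀ μ : Fin (d+1) → ℤ, (∑ k, (μ k - ν k).natAbs) ≤ n →
      (∑ k, μ k) = (∑ k, ν k) →
      (∀ k, k ∈ J → 1 ≤ μ k) → (∀ k, k ∉ J → μ k ≤ 0) →
      Finsupp.single μ (1:K) ∈ W → Finsupp.single ν (1:K) ∈ W := by
  classical
  intro n
  induction n with
  | zero =>
    intro μ hD _ _ _ hμW
    have h0 : ∀ k, (μ k - ν k).natAbs = 0 := by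
      intro k
      have := Finset.sum_eq_zero_iff.mp (Nat.le_zero.mp hD) k (Finset.mem_univ k)
      exact this
    have : μ = ν := funext fun k => by have := h0 k; omega
    rwa [this] at hμW
  | succ n IH =>
    intro μ hD hsum hμ1 hμ0 hμW
    by_cases heq : μ = ν
    · rwa [heq] at hμW
    · have hfs : (∑ k, (μ k - ν k)) = 0 := by
        rw [Finset.sum_sub_distrib, hsum, sub_self]
      have hexj : ∃ j, 0 < μ j - ν j := by
        by_contra h
        push_neg at h
        have hall := (Finset.sum_eq_zero_iff_of_nonpos
          (fun k _ => h k)).mp hfs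
        exact heq (funext fun k => by
          have := hall k (Finset.mem_univ k); omega)
      have hexi : ∃ i, μ i - ν i < 0 := by
        by_contra h
        push_neg at h
        have hall := (Finset.sum_eq_zero_iff_of_nonneg
          (fun k _ => h k)).mp hfs
        exact heq (funext fun k => by
          have := hall k (Finset.mem_univ k); omega)
      obtain ⟨j, hj⟩ := hexj
      obtain ⟨i, hi⟩ := hexi
      have hij : i ≠ j := by intro h; rw [h] at hi; omega
      set μ' := μ + Pi.single i 1 - Pi.single j 1 with hμ'def
      have hμ'app : ∀ k, μ' k =
          μ k + (if k = i then 1 else 0) - (if k = j then 1 else 0) := by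
        intro k
        simp [hμ'def, Pi.single_apply]
      have hμji : μ j ≠ 1 := by
        by_cases hjJ : j ∈ J
        · have := hν1 j hjJ; omega
        · have := hμ0 j hjJ; omega
      have hstep := hmv i j hij μ hμji hμW
      refine IH μ' ?_ ?_ ?_ ?_ hstep
      · have hlt : (∑ k, (μ' k - ν k).natAbs) < ∑ k, (μ k - ν k).natAbs := by
          refine Finset.sum_lt_sum (fun k _ => ?_) ⟨j, Finset.mem_univ j, ?_⟩
          · rw [hμ'app k]
            rcases eq_or_ne k i with rfl | hki
            · rw [if_pos rfl, if_neg hij]; omega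
            · rcases eq_or_ne k j with rfl | hkj
              · rw [if_neg hki, if_pos rfl]; omega
              · rw [if_neg hki, if_neg hkj]; omega
          · rw [hμ'app j, if_neg (Ne.symm hij), if_pos rfl]; omega
        omega
      · rw [← hsum]
        have : ∀ k, μ' k = μ k + ((if k = i then 1 else 0) - (if k = j then 1 else 0)) := by
          intro k; rw [hμ'app k]; ring
        calc (∑ k, μ' k)
            = ∑ k, (μ k + ((if k = i then (1:ℤ) else 0) - (if k = j then 1 else 0))) :=
              Finset.sum_congr rfl (fun k _ => this k)
          _ = (∑ k, μ k) + ((∑ k, (if k = i then (1:ℤ) else 0)) -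
                (∑ k, (if k = j then (1:ℤ) else 0))) := by
              rw [Finset.sum_add_distrib, Finset.sum_sub_distrib]
          _ = ∑ k, μ k := by simp
      · intro k hkJ
        rw [hμ'app k]
        rcases eq_or_ne k i with rfl | hki
        · rw [if_pos rfl, if_neg hij]
          have := hμ1 k hkJ; omega
        · rcases eq_or_ne k j with rfl | hkj
          · rw [if_neg hki, if_pos rfl]
            have := hν1 k hkJ; omega
          · rw [if_neg hki, if_neg hkj]
            have := hμ1 k hkJ; omega
      · intro k hkJ
        rw [hμ'app k]
        rcases eq_or_ne k i with rfl | hki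
        · rw [if_pos rfl, if_neg hij]
          have := hν0 k hkJ; omega
        · rcases eq_or_ne k j with rfl | hkj
          · rw [if_neg hki, if_pos rfl]
            have := hμ0 k hkJ; omega
          · rw [if_neg hki, if_neg hkj]
            have := hμ0 k hkJ; omega

end Aux2

section Aux3

variable {K : Type} [Field K] [CharZero K] {d : ℕ}

lemma aux_app (i j : Fin (d+1)) (μ : Fin (d+1) → ℤ) (k : Fin (d+1)) :
    ((μ + Pi.single i 1 - Pi.single j 1 : Fin (d+1) → ℤ) k) =
      μ k + (if k = i then 1 else 0) - (if k = j then 1 else 0) := by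
  simp [Pi.single_apply]

lemma aux_sum (i j : Fin (d+1)) (μ : Fin (d+1) → ℤ) :
    (∑ k, ((μ + Pi.single i 1 - Pi.single j 1 : Fin (d+1) → ℤ) k)) = ∑ k, μ k := by
  calc (∑ k, ((μ + Pi.single i 1 - Pi.single j 1 : Fin (d+1) → ℤ) k))
      = ∑ k, (μ k + ((if k = i then (1:ℤ) else 0) - (if k = j then 1 else 0))) :=
        Finset.sum_congr rfl (fun k _ => by rw [aux_app]; ring)
    _ = (∑ k, μ k) + ((∑ k, (if k = i then (1:ℤ) else 0)) -
          (∑ k, (if k = j then (1:ℤ) else 0))) := by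
        rw [Finset.sum_add_distrib, Finset.sum_sub_distrib]
    _ = ∑ k, μ k := by simp

lemma aux_all_from_std
    (ρ : Matrix (Fin (d+1)) (Fin (d+1)) K →ₗ[K]
        Module.End K ((Fin (d+1) → ℤ) →₀ K))
    (W : Submodule K ((Fin (d+1) → ℤ) →₀ K))
    (h : ∀ i j : Fin (d+1), ∀ v ∈ W, ρ (Matrix.single i j (1:K)) v ∈ W) :
    ∀ x : Matrix (Fin (d+1)) (Fin (d+1)) K, ∀ v ∈ W, ρ x v ∈ W := by
  intro x v hv
  have hx : x = ∑ i, ∑ j, Matrix.single i j (x i j) :=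
    Matrix.matrix_eq_sum_single x
  rw [hx]
  simp only [map_sum, LinearMap.sum_apply]
  refine Submodule.sum_mem _ (fun i _ => Submodule.sum_mem _ (fun j _ => ?_))
  have hsb : Matrix.single i j (x i j) = x i j • Matrix.single i j (1:K) := by
    rw [Matrix.smul_single, smul_eq_mul, mul_one]
  rw [hsb, map_smul, LinearMap.smul_apply]
  exact W.smul_mem _ (h i j v hv)

lemma aux_stab
    (ρ : Matrix (Fin (d+1)) (Fin (d+1)) K →ₗ[K]
        Module.End K ((Fin (d+1) → ℤ) →₀ K))
    (hρ₁ : ∀ (i j : Fin (d+1)), i ≠ j → ∀ μ : Fin (d+1) → ℤ,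
      ρ (Matrix.single i j (1:K)) (Finsupp.single μ (1:K)) =
        (μ j - 1) • Finsupp.single (μ + Pi.single i 1 - Pi.single j 1) (1:K))
    (hρ₂ : ∀ (k : Fin (d+1)) (μ : Fin (d+1) → ℤ),
      ρ (Matrix.single k k (1:K)) (Finsupp.single μ (1:K)) =
        μ k • Finsupp.single μ (1:K))
    (C : (Fin (d+1) → ℤ) → Prop)
    (hC : ∀ μ, C μ → ∀ i j : Fin (d+1), i ≠ j → μ j ≠ 1 →
      C (μ + Pi.single i 1 - Pi.single j 1)) :
    ∀ x : Matrix (Fin (d+1)) (Fin (d+1)) K,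
      ∀ v ∈ Submodule.span K {w | ∃ μ, C μ ∧ w = Finsupp.single μ (1:K)},
        ρ x v ∈ Submodule.span K {w | ∃ μ, C μ ∧ w = Finsupp.single μ (1:K)} := by
  apply aux_all_from_std
  intro i j v hv
  refine Submodule.span_induction ?_ ?_ ?_ ?_ hv
  · rintro w ⟨μ, hμC, rfl⟩
    rcases eq_or_ne i j with rfl | hij
    · rw [hρ₂ i μ, ← Int.cast_smul_eq_zsmul K]
      exact Submodule.smul_mem _ _ (Submodule.subset_span ⟨μ, hμC, rfl⟩)
    · rw [hρ₁ i j hij μ]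
      rcases eq_or_ne (μ j) 1 with h1 | h1
      · rw [h1, sub_self, zero_smul]; exact zero_mem _
      · rw [← Int.cast_smul_eq_zsmul K]
        exact Submodule.smul_mem _ _
          (Submodule.subset_span ⟨_, hC μ hμC i j hij h1, rfl⟩)
  · rw [map_zero]; exact zero_mem _
  · intro x y _ _ hx hy; rw [map_add]; exact add_mem hx hy
  · intro a x _ hx; rw [map_smul]; exact Submodule.smul_mem _ _ hx

end Aux3
/-- For J a nonempty proper subset of {0,…,d}, with
M = span{δ_μ : Σμ = 0, J ⊆ J(μ)} and N = span{δ_μ : Σμ = 0, J ⊊ J(μ)}, one has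
N ⊆ M, both are ρ(𝔤)-stable, and every ρ(𝔤)-stable subspace between N and M equals
N or M (irreducibility of 𝔟_J/𝔟_J^>). -/
theorem stmt_9 (K : Type) [Field K] [CharZero K] (d : ℕ) (hd : 1 ≤ d)
    (ρ : Matrix (Fin (d+1)) (Fin (d+1)) K →ₗ[K]
        Module.End K ((Fin (d+1) → ℤ) →₀ K))
    (hρ₁ : ∀ (i j : Fin (d+1)), i ≠ j → ∀ μ : Fin (d+1) → ℤ,
      ρ (Matrix.single i j (1:K)) (Finsupp.single μ (1:K)) =
        (μ j - 1) • Finsupp.single (μ + Pi.single i 1 - Pi.single j 1) (1:K))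
    (hρ₂ : ∀ (k : Fin (d+1)) (μ : Fin (d+1) → ℤ),
      ρ (Matrix.single k k (1:K)) (Finsupp.single μ (1:K)) =
        μ k • Finsupp.single μ (1:K))
    (J : Set (Fin (d+1))) (hJ : J.Nonempty) (hJ' : J ≠ Set.univ)
    (M N : Submodule K ((Fin (d+1) → ℤ) →₀ K))
    (hM : M = Submodule.span K {w : (Fin (d+1) → ℤ) →₀ K | ∃ μ : Fin (d+1) → ℤ,
        (∑ k, μ k) = 0 ∧ J ⊆ {k | 0 < μ k} ∧ w = Finsupp.single μ (1:K)})
    (hN : N = Submodule.span K {w : (Fin (d+1) → ℤ) →₀ K | ∃ μ : Fin (d+1) → ℤ,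
        (∑ k, μ k) = 0 ∧ J ⊆ {k | 0 < μ k} ∧ J ≠ {k | 0 < μ k} ∧
        w = Finsupp.single μ (1:K)}) :
    N ≤ M ∧
    (∀ x : Matrix (Fin (d+1)) (Fin (d+1)) K, ∀ v ∈ M, ρ x v ∈ M) ∧
    (∀ x : Matrix (Fin (d+1)) (Fin (d+1)) K, ∀ v ∈ N, ρ x v ∈ N) ∧
    (∀ W : Submodule K ((Fin (d+1) → ℤ) →₀ K), N ≤ W → W ≤ M →
      (∀ x : Matrix (Fin (d+1)) (Fin (d+1)) K, ∀ v ∈ W, ρ x v ∈ W) →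
      W = N ∨ W = M) := by
  classical
  have hMset : {w : (Fin (d+1) → ℤ) →₀ K | ∃ μ : Fin (d+1) → ℤ,
      (∑ k, μ k) = 0 ∧ J ⊆ {k | 0 < μ k} ∧ w = Finsupp.single μ (1:K)} =
      {w : (Fin (d+1) → ℤ) →₀ K | ∃ μ : Fin (d+1) → ℤ,
        ((∑ k, μ k) = 0 ∧ J ⊆ {k | 0 < μ k}) ∧ w = Finsupp.single μ (1:K)} := by
    ext w
    constructor
    · rintro ⟨μ, h1, h2, h3⟩; exact ⟨μ, ⟨h1, h2⟩, h3⟩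
    · rintro ⟨μ, ⟨h1, h2⟩, h3⟩; exact ⟨μ, h1, h2, h3⟩
  have hNset : {w : (Fin (d+1) → ℤ) →₀ K | ∃ μ : Fin (d+1) → ℤ,
      (∑ k, μ k) = 0 ∧ J ⊆ {k | 0 < μ k} ∧ J ≠ {k | 0 < μ k} ∧
        w = Finsupp.single μ (1:K)} =
      {w : (Fin (d+1) → ℤ) →₀ K | ∃ μ : Fin (d+1) → ℤ,
        ((∑ k, μ k) = 0 ∧ J ⊆ {k | 0 < μ k} ∧ J ≠ {k | 0 < μ k}) ∧
        w = Finsupp.single μ (1:K)} := by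
    ext w
    constructor
    · rintro ⟨μ, h1, h2, h3, h4⟩; exact ⟨μ, ⟨h1, h2, h3⟩, h4⟩
    · rintro ⟨μ, ⟨h1, h2, h3⟩, h4⟩; exact ⟨μ, h1, h2, h3, h4⟩
  have hCM : ∀ μ : Fin (d+1) → ℤ, ((∑ k, μ k) = 0 ∧ J ⊆ {k | 0 < μ k}) →
      ∀ i j : Fin (d+1), i ≠ j → μ j ≠ 1 →
      ((∑ k, (μ + Pi.single i 1 - Pi.single j 1 : Fin (d+1) → ℤ) k) = 0 ∧
        J ⊆ {k | 0 < (μ + Pi.single i 1 - Pi.single j 1 : Fin (d+1) → ℤ) k}) := by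
    rintro μ ⟨h1, h2⟩ i j hij hj1
    constructor
    · rw [aux_sum]; exact h1
    · intro k hk
      have hk' : 0 < μ k := h2 hk
      simp only [Set.mem_setOf_eq]
      rw [aux_app]
      rcases eq_or_ne k i with rfl | hki
      · rw [if_pos rfl, if_neg hij]; omega
      · rcases eq_or_ne k j with rfl | hkj
        · rw [if_neg hki, if_pos rfl]; omega
        · rw [if_neg hki, if_neg hkj]; omega
  have hCN : ∀ μ : Fin (d+1) → ℤ,
      ((∑ k, μ k) = 0 ∧ J ⊆ {k | 0 < μ k} ∧ J ≠ {k | 0 < μ k}) →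
      ∀ i j : Fin (d+1), i ≠ j → μ j ≠ 1 →
      ((∑ k, (μ + Pi.single i 1 - Pi.single j 1 : Fin (d+1) → ℤ) k) = 0 ∧
        J ⊆ {k | 0 < (μ + Pi.single i 1 - Pi.single j 1 : Fin (d+1) → ℤ) k} ∧
        J ≠ {k | 0 < (μ + Pi.single i 1 - Pi.single j 1 : Fin (d+1) → ℤ) k}) := by
    rintro μ ⟨h1, h2, h3⟩ i j hij hj1
    obtain ⟨hs, hsub⟩ := hCM μ ⟨h1, h2⟩ i j hij hj1
    refine ⟨hs, hsub, ?_⟩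
    obtain ⟨ℓ, hℓμ, hℓJ⟩ := Set.exists_of_ssubset (lt_of_le_of_ne h2 h3)
    intro hEq
    apply hℓJ
    rw [hEq]
    have hℓμ' : 0 < μ ℓ := hℓμ
    simp only [Set.mem_setOf_eq]
    rw [aux_app]
    rcases eq_or_ne ℓ i with rfl | hki
    · rw [if_pos rfl, if_neg hij]; omega
    · rcases eq_or_ne ℓ j with rfl | hkj
      · rw [if_neg hki, if_pos rfl]; omega
      · rw [if_neg hki, if_neg hkj]; omega
  refine ⟨?_, ?_, ?_, ?_⟩
  · rw [hM, hN]
    exact Submodule.span_mono (by rintro w ⟨μ, h1, h2, _, h4⟩; exact ⟨μ, h1, h2, h4⟩)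
  · rw [hM, hMset]
    exact aux_stab ρ hρ₁ hρ₂ _ hCM
  · rw [hN, hNset]
    exact aux_stab ρ hρ₁ hρ₂ _ hCN
  · intro W hNW hWM hWst
    by_cases hWN : W ≤ N
    · exact Or.inl (le_antisymm hWN hNW)
    right
    obtain ⟨v, hvW, hvN⟩ := SetLike.not_le_iff_exists.mp hWN
    have hvM : v ∈ M := hWM hvW
    have hsuppM : ∀ u ∈ M, ∀ μ ∈ u.support,
        (∑ k, μ k) = 0 ∧ J ⊆ {k | 0 < μ k} := by
      intro u hu
      let P : Submodule K ((Fin (d+1) → ℤ) →₀ K) :=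
        { carrier := {u | ∀ μ ∈ u.support, (∑ k, μ k) = 0 ∧ J ⊆ {k | 0 < μ k}}
          add_mem' := by
            intro a b ha hb μ hμ
            rcases Finset.mem_union.mp (Finsupp.support_add hμ) with h | h
            exacts [ha μ h, hb μ h]
          zero_mem' := by intro μ hμ; simp at hμ
          smul_mem' := by
            intro c a ha μ hμ
            exact ha μ (Finsupp.support_smul hμ) }
      have hMP : M ≤ P := by
        rw [hM]
        refine Submodule.span_le.mpr ?_
        rintro w ⟨μ, h1, h2, rfl⟩ μ' hμ'
        have hμ'eq : μ' = μ :=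
          Finset.mem_singleton.mp (Finsupp.support_single_subset hμ')
        subst hμ'eq
        exact ⟨h1, h2⟩
      exact hMP hu
    obtain ⟨μ₀, hμ₀v, hJμ₀⟩ : ∃ μ₀ ∈ v.support, J = {k | 0 < μ₀ k} := by
      by_contra h
      push_neg at h
      apply hvN
      have hvsum : v = ∑ μ ∈ v.support, (v μ) • Finsupp.single μ (1:K) := by
        conv_lhs => rw [← Finsupp.sum_single v]
        rw [Finsupp.sum]
        exact Finset.sum_congr rfl (fun μ _ => (Finsupp.smul_single_one μ (v μ)).symm)
      rw [hN, hvsum]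
      exact Submodule.sum_mem _ (fun μ hμ => Submodule.smul_mem _ _
        (Submodule.subset_span
          ⟨μ, (hsuppM v hvM μ hμ).1, (hsuppM v hvM μ hμ).2, h μ hμ, rfl⟩))
    have hδ : Finsupp.single μ₀ (1:K) ∈ W :=
      aux_sep ρ hρ₂ W (fun k u hu => hWst _ u hu) v.support.card v hvW le_rfl μ₀ hμ₀v
    have hμ₀sum : (∑ k, μ₀ k) = 0 := (hsuppM v hvM μ₀ hμ₀v).1
    apply le_antisymm hWM
    rw [hM]
    refine Submodule.span_le.mpr ?_
    rintro w ⟨ν, hν1, hν2, rfl⟩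
    by_cases hJν : J = {k | 0 < ν k}
    · have hν1' : ∀ k, k ∈ J → 1 ≤ ν k := by
        intro k hk
        have : 0 < ν k := by rw [hJν] at hk; exact hk
        omega
      have hν0' : ∀ k, k ∉ J → ν k ≤ 0 := by
        intro k hk
        by_contra hc
        push_neg at hc
        exact hk (by rw [hJν]; exact hc)
      have hμ1' : ∀ k, k ∈ J → 1 ≤ μ₀ k := by
        intro k hk
        have : 0 < μ₀ k := by rw [hJμ₀] at hk; exact hk
        omega
      have hμ0' : ∀ k, k ∉ J → μ₀ k ≤ 0 := by
        intro k hk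
        by_contra hc
        push_neg at hc
        exact hk (by rw [hJμ₀]; exact hc)
      have hsum' : (∑ k, μ₀ k) = ∑ k, ν k := by rw [hμ₀sum, hν1]
      exact aux_reach W J
        (fun i j hij μ hμj h => aux_move ρ hρ₁ W hWst hij hμj h) ν hν1' hν0'
        (∑ k, (μ₀ k - ν k).natAbs) μ₀ le_rfl hsum' hμ1' hμ0' hδ
    · apply hNW
      rw [hN]
      exact Submodule.subset_span ⟨ν, hν1, hν2, hJν, rfl⟩
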